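/- Let 0 < m ≤ 1, let d, n be positive integers, let k_1, …, k_n be positive integers, and let A_i ∈ ℝ^{d × k_i} for i = 1, …, n. Define Â_i = min{√(1−m)/‖A_i‖₂, 1} · A_i (with Â_i = A_i when A_i = 0), and define the block matrix Φ ∈ ℝ^{K × K} with K = Σ_i k_i by Φ_{ij} = −Â_i^T Â_j for i ≠ j and Φ_{ii} = 0. Then (1) every diagonal block Φ_{ii} is the zero matrix, and (2) I − Φ ⪰ mI, i.e., x^T (I − Φ) x ≥ m‖x‖₂² for all x ∈ ℝ^K. -/
import Mathlib


open Matrix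

/-- The spectral norm (ℓ₂→ℓ₂ operator norm) of a real matrix. -/
noncomputable def specNorm {m n : Type*} [Fintype m] [Fintype n] [DecidableEq n]
    (A : Matrix m n ℝ) : ℝ :=
  ‖LinearMap.toContinuousLinearMap (Matrix.toEuclideanLin A)‖

/-- The spectrally normalized version `Â = min{√(1−m)/‖A‖₂, 1} · A` of a matrix.
(When `A = 0` this equals `A`, matching the convention `Â = A` in that case.) -/
noncomputable def hatA {d k : ℕ} (m : ℝ) (A : Matrix (Fin d) (Fin k) ℝ) :
    Matrix (Fin d) (Fin k) ℝ :=
  (min (Real.sqrt (1 - m) / specNorm A) 1) • A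

lemma specNorm_nonneg {d k : ℕ} (A : Matrix (Fin d) (Fin k) ℝ) : 0 ≤ specNorm A :=
  norm_nonneg _

lemma dot_eq_norm_sq {k : ℕ} (v : Fin k → ℝ) :
    v ⬝ᵥ v = ‖(WithLp.equiv 2 (Fin k → ℝ)).symm v‖ ^ 2 := by
  rw [EuclideanSpace.norm_eq, Real.sq_sqrt (by positivity)]
  simp [dotProduct, sq]

lemma mulVec_dot_le {d k : ℕ} (A : Matrix (Fin d) (Fin k) ℝ) (v : Fin k → ℝ) :
    A.mulVec v ⬝ᵥ A.mulVec v ≤ specNorm A ^ 2 * (v ⬝ᵥ v) := by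
  rw [dot_eq_norm_sq, dot_eq_norm_sq]
  have h := (LinearMap.toContinuousLinearMap (Matrix.toEuclideanLin A)).le_opNorm
    ((WithLp.equiv 2 (Fin k → ℝ)).symm v)
  have he : (LinearMap.toContinuousLinearMap (Matrix.toEuclideanLin A))
      ((WithLp.equiv 2 (Fin k → ℝ)).symm v) = (WithLp.equiv 2 (Fin d → ℝ)).symm (A.mulVec v) := by
    simp [Matrix.toEuclideanLin_apply]
  rw [he] at h
  calc ‖(WithLp.equiv 2 (Fin d → ℝ)).symm (A.mulVec v)‖ ^ 2
      ≤ (specNorm A * ‖(WithLp.equiv 2 (Fin k → ℝ)).symm v‖) ^ 2 := by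
        apply sq_le_sq' _ h
        nlinarith [norm_nonneg ((WithLp.equiv 2 (Fin d → ℝ)).symm (A.mulVec v))]
    _ = specNorm A ^ 2 * ‖(WithLp.equiv 2 (Fin k → ℝ)).symm v‖ ^ 2 := by ring

lemma specNorm_smul {d k : ℕ} (c : ℝ) (A : Matrix (Fin d) (Fin k) ℝ) :
    specNorm (c • A) = |c| * specNorm A := by
  unfold specNorm
  rw [_root_.map_smul]
  have : LinearMap.toContinuousLinearMap (c • Matrix.toEuclideanLin A)
      = c • LinearMap.toContinuousLinearMap (Matrix.toEuclideanLin A) := by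
    ext v; simp
  rw [this]
  rw [norm_smul c (LinearMap.toContinuousLinearMap (Matrix.toEuclideanLin A)), Real.norm_eq_abs]

lemma specNorm_hatA_le {d k : ℕ} (m : ℝ) (hm1 : m ≤ 1) (A : Matrix (Fin d) (Fin k) ℝ) :
    specNorm (hatA m A) ≤ Real.sqrt (1 - m) := by
  have hs := specNorm_nonneg A
  have hq : (0:ℝ) ≤ Real.sqrt (1 - m) := Real.sqrt_nonneg _
  have hc : 0 ≤ min (Real.sqrt (1 - m) / specNorm A) 1 := le_min (by positivity) zero_le_one
  rw [hatA, specNorm_smul, abs_of_nonneg hc]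
  rcases eq_or_lt_of_le hs with h | h
  · rw [← h, mul_zero]; exact hq
  · rcases le_total (Real.sqrt (1 - m) / specNorm A) 1 with hle | hle
    · rw [min_eq_left hle, div_mul_cancel₀ _ (ne_of_gt h)]
    · rw [min_eq_right hle]
      rw [le_div_iff₀ h, one_mul] at hle
      simpa using hle

lemma hatA_dot_le {d k : ℕ} (m : ℝ) (hm1 : m ≤ 1) (A : Matrix (Fin d) (Fin k) ℝ)
    (v : Fin k → ℝ) :
    (hatA m A).mulVec v ⬝ᵥ (hatA m A).mulVec v ≤ (1 - m) * (v ⬝ᵥ v) := by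
  refine le_trans (mulVec_dot_le _ v) ?_
  have hv : 0 ≤ v ⬝ᵥ v := Finset.sum_nonneg fun _ _ => mul_self_nonneg _
  have h1 : specNorm (hatA m A) ^ 2 ≤ (1 - m) := by
    have := specNorm_hatA_le m hm1 A
    nlinarith [specNorm_nonneg (hatA m A), Real.sq_sqrt (by linarith : (0:ℝ) ≤ 1 - m),
      Real.sqrt_nonneg (1 - m)]
  nlinarith [specNorm_nonneg (hatA m A)]

theorem stmt0 {n d : ℕ} (hn : 0 < n) (hd : 0 < d) (m : ℝ) (hm0 : 0 < m) (hm1 : m ≤ 1)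
    (k : Fin n → ℕ) (hk : ∀ i, 0 < k i)
    (A : (i : Fin n) → Matrix (Fin d) (Fin (k i)) ℝ)
    (Φ : Matrix ((i : Fin n) × Fin (k i)) ((i : Fin n) × Fin (k i)) ℝ)
    (hΦ : ∀ (i j : Fin n) (a : Fin (k i)) (c : Fin (k j)),
        Φ ⟨i, a⟩ ⟨j, c⟩ =
          if i = j then 0 else -(((hatA m (A i))ᵀ * hatA m (A j)) a c)) :
    (∀ (i : Fin n) (a c : Fin (k i)), Φ ⟨i, a⟩ ⟨i, c⟩ = 0) ∧
    (∀ x : ((i : Fin n) × Fin (k i)) → ℝ,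
        m * (x ⬝ᵥ x) ≤ x ⬝ᵥ ((1 - Φ).mulVec x)) := by
  refine ⟨fun i a c => by rw [hΦ]; simp, ?_⟩
  intro x
  set y : Fin n → Fin d → ℝ :=
    fun i => (hatA m (A i)).mulVec (fun a => x ⟨i, a⟩) with hy
  have step : ∀ i j : Fin n, ∑ a, ∑ c, x ⟨i,a⟩ * (Φ ⟨i,a⟩ ⟨j,c⟩ * x ⟨j,c⟩)
      = if i = j then 0 else -(y i ⬝ᵥ y j) := by
    intro i j
    by_cases h : i = j
    · subst h; simp [hΦ]
    · simp only [hΦ, if_neg h]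
      have hyy : (fun a => x ⟨i,a⟩) ⬝ᵥ
          (((hatA m (A i))ᵀ * hatA m (A j)).mulVec (fun c => x ⟨j,c⟩)) = y i ⬝ᵥ y j := by
        rw [← Matrix.mulVec_mulVec, Matrix.dotProduct_mulVec, Matrix.vecMul_transpose]
      rw [← hyy]
      simp only [dotProduct, Matrix.mulVec, Finset.mul_sum, neg_mul, mul_neg,
        ← Finset.sum_neg_distrib]
  have expand : x ⬝ᵥ (Φ.mulVec x) = ∑ i, ∑ j, (if i = j then 0 else -(y i ⬝ᵥ y j)) := by
    have e1 : x ⬝ᵥ (Φ.mulVec x)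
        = ∑ p : ((i : Fin n) × Fin (k i)), ∑ q : ((i : Fin n) × Fin (k i)),
            x p * (Φ p q * x q) := by
      simp [dotProduct, Matrix.mulVec, Finset.mul_sum]
    rw [e1, ← Finset.univ_sigma_univ, Finset.sum_sigma]
    simp only [Finset.sum_sigma]
    refine Finset.sum_congr rfl fun i _ => ?_
    rw [Finset.sum_comm]
    exact Finset.sum_congr rfl fun j _ => step i j
  have hrow : ∀ i : Fin n, ∑ j, (if i = j then 0 else -(y i ⬝ᵥ y j))
      = -(y i ⬝ᵥ ∑ j, y j) + y i ⬝ᵥ y i := by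
    intro i
    have : ∀ j : Fin n, (if i = j then 0 else -(y i ⬝ᵥ y j))
        = -(y i ⬝ᵥ y j) + (if i = j then y i ⬝ᵥ y j else 0) := by
      intro j; by_cases h : i = j <;> simp [h]
    simp only [this, Finset.sum_add_distrib, Finset.sum_neg_distrib,
      Finset.sum_ite_eq, Finset.mem_univ, if_true]
    congr 1
    simp only [dotProduct, Finset.mul_sum, Finset.sum_apply]
    rw [Finset.sum_comm]
  have expand2 : x ⬝ᵥ (Φ.mulVec x)
      = -((∑ i, y i) ⬝ᵥ (∑ i, y i)) + ∑ i, y i ⬝ᵥ y i := by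
    rw [expand]
    simp only [hrow, Finset.sum_add_distrib, Finset.sum_neg_distrib]
    congr 1
    simp only [dotProduct, Finset.sum_mul, Finset.sum_apply]
    rw [Finset.sum_comm]
  have hfull : x ⬝ᵥ ((1 - Φ).mulVec x)
      = x ⬝ᵥ x + (∑ i, y i) ⬝ᵥ (∑ i, y i) - ∑ i, y i ⬝ᵥ y i := by
    rw [Matrix.sub_mulVec, Matrix.one_mulVec, dotProduct_sub, expand2]
    ring
  have hxsum : x ⬝ᵥ x = ∑ i, (fun a => x ⟨i,a⟩) ⬝ᵥ (fun a => x ⟨i,a⟩) := by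
    rw [dotProduct, ← Finset.univ_sigma_univ, Finset.sum_sigma]
    rfl
  have hbound : ∑ i, y i ⬝ᵥ y i ≤ (1 - m) * (x ⬝ᵥ x) := by
    rw [hxsum, Finset.mul_sum]
    exact Finset.sum_le_sum fun i _ => hatA_dot_le m hm1 (A i) _
  have hsq : 0 ≤ (∑ i, y i) ⬝ᵥ (∑ i, y i) :=
    Finset.sum_nonneg fun _ _ => mul_self_nonneg _
  linarith [hfull, hbound, hsq]
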